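/- Let (X,d) be a metric space and K a nonempty subset of X. Let A, B, S, T be selfmaps of K. Suppose there exist φ ∈ Φ, real numbers p > 0, λ > 0 and r ≥ 0, q ≥ 0 such that for all x, y ∈ K: [(d(Sx,Ty))^p + r·(d(Sx,Ty))^q]^λ ≤ φ(max{[(d(Ax,By))^p + r·(d(Ax,Sx))^q]^λ, [(d(Ax,By))^p + r·(d(By,Ty))^q]^λ, [(d(Ax,Sx))^p + r·(d(By,Ty))^q]^λ, [(d(By,Ty))^p + r·(d(Ax,Sx))^q]^λ, min{[(d(By,Sx))^p + r·(d(Ax,Sx))^q]^λ, [(d(Ax,Ty))^p + r·(d(By,Ty))^q]^λ}, min{[(d(By,Sx))^p + r·(d(By,Ty))^q]^λ, [(d(Ax,Ty))^p + r·(d(Ax,Sx))^q]^λ}}). Assume the pairs (A,S) and (B,T) are weakly compatible, T(K) ⊆ A(K) and S(K) ⊆ B(K). If at least one of the sets T(K), S(K), A(K), or B(K) is complete, then A, B, S and T have a unique common fixed point. -/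

import Mathlib

open Set Filter Topology
open scoped NNReal

def InPhi (φ : ℝ≥0 → ℝ≥0) : Prop :=
  Monotone φ ∧ Continuous φ ∧ ∀ t, 0 < t → 0 < φ t ∧ φ t < t

namespace Stmt3Aux

lemma phi_zero {φ : ℝ≥0 → ℝ≥0} (hφ : InPhi φ) : φ 0 = 0 := by
  by_contra h
  have h0 : 0 < φ 0 := zero_lt_iff.mpr h
  have h1 : φ 0 ≤ φ (φ 0) := hφ.1 zero_le
  have h2 : φ (φ 0) < φ 0 := (hφ.2.2 _ h0).2
  exact absurd (h1.trans_lt h2) (lt_irrefl _)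

lemma phi_le {φ : ℝ≥0 → ℝ≥0} (hφ : InPhi φ) (t : ℝ≥0) : φ t ≤ t := by
  rcases eq_or_lt_of_le (zero_le : 0 ≤ t) with h | h
  · rw [← h, phi_zero hφ]
  · exact (hφ.2.2 t h).2.le

/-- If `t ≤ φ s` and `s ≤ t` then `t = 0`. -/
lemma collapse {φ : ℝ≥0 → ℝ≥0} (hφ : InPhi φ) {t s : ℝ≥0} (h : t ≤ φ s) (hst : s ≤ t) :
    t = 0 := by
  by_contra ht
  have h0 : 0 < t := zero_lt_iff.mpr ht
  have : t ≤ φ t := h.trans (hφ.1 hst)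
  exact absurd (this.trans_lt (hφ.2.2 t h0).2) (lt_irrefl _)

lemma le_phi_of_le_phi_max {φ : ℝ≥0 → ℝ≥0} (hφ : InPhi φ) {a b : ℝ≥0}
    (h : b ≤ φ (max a b)) : b ≤ φ a := by
  rcases le_total b a with hba | hab
  · rwa [max_eq_left hba] at h
  · rw [max_eq_right hab] at h
    have : b = 0 := collapse hφ h le_rfl
    simp [this]

noncomputable def Fex (p q lam : ℝ) (r : ℝ≥0) (a b : ℝ≥0) : ℝ≥0 :=
  (a ^ p + r * b ^ q) ^ lam

lemma Fex_mono {p q lam : ℝ} {r : ℝ≥0} (hp : 0 ≤ p) (hq : 0 ≤ q) (hlam : 0 ≤ lam)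
    {a a' b b' : ℝ≥0} (ha : a ≤ a') (hb : b ≤ b') :
    Fex p q lam r a b ≤ Fex p q lam r a' b' :=
  NNReal.rpow_le_rpow
    (add_le_add (NNReal.rpow_le_rpow ha hp) (mul_le_mul_of_nonneg_left (NNReal.rpow_le_rpow hb hq) (zero_le : (0:ℝ≥0) ≤ r)))
    hlam

lemma Fex_mixed {p q lam : ℝ} {r : ℝ≥0} (hp : 0 ≤ p) (hq : 0 ≤ q) (hlam : 0 ≤ lam)
    (a b : ℝ≥0) :
    Fex p q lam r a b ≤ max (Fex p q lam r a a) (Fex p q lam r b b) := by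
  rcases le_total a b with h | h
  · exact le_max_of_le_right (Fex_mono hp hq hlam h le_rfl)
  · exact le_max_of_le_left (Fex_mono hp hq hlam le_rfl h)

lemma Fex_eq_zero {p q lam : ℝ} {r : ℝ≥0} (hp : 0 < p) (hlam : 0 < lam) {δ : ℝ≥0}
    (h : Fex p q lam r δ δ = 0) : δ = 0 := by
  have h1 : δ ^ p + r * δ ^ q = 0 := (NNReal.rpow_eq_zero_iff.mp h).1
  have h2 : δ ^ p = 0 := by
    have := add_eq_zero.mp h1
    exact this.1
  exact (NNReal.rpow_eq_zero_iff.mp h2).1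

lemma Fex_continuous {p q lam : ℝ} {r : ℝ≥0} (hp : 0 ≤ p) (hq : 0 ≤ q) (hlam : 0 ≤ lam) :
    Continuous fun ab : ℝ≥0 × ℝ≥0 => Fex p q lam r ab.1 ab.2 := by
  show Continuous fun ab : ℝ≥0 × ℝ≥0 => (ab.1 ^ p + r * ab.2 ^ q) ^ lam
  have h1 : Continuous fun ab : ℝ≥0 × ℝ≥0 => ab.1 ^ p :=
    (NNReal.continuous_rpow_const hp).comp continuous_fst
  have h2 : Continuous fun ab : ℝ≥0 × ℝ≥0 => r * ab.2 ^ q :=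
    continuous_const.mul ((NNReal.continuous_rpow_const hq).comp continuous_snd)
  have h3 : Continuous fun ab : ℝ≥0 × ℝ≥0 => ab.1 ^ p + r * ab.2 ^ q := h1.add h2
  exact (NNReal.continuous_rpow_const hlam).comp h3

lemma Fex_tendsto {p q lam : ℝ} {r : ℝ≥0} (hp : 0 ≤ p) (hq : 0 ≤ q) (hlam : 0 ≤ lam)
    {α : Type*} {l : Filter α} {u v : α → ℝ≥0} {U V : ℝ≥0}
    (hu : Tendsto u l (𝓝 U)) (hv : Tendsto v l (𝓝 V)) :
    Tendsto (fun k => Fex p q lam r (u k) (v k)) l (𝓝 (Fex p q lam r U V)) := by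
  show Tendsto (fun k => ((u k) ^ p + r * (v k) ^ q) ^ lam) l (𝓝 ((U ^ p + r * V ^ q) ^ lam))
  have h1 : Tendsto (fun k => (u k) ^ p) l (𝓝 (U ^ p)) :=
    ((NNReal.continuous_rpow_const hp).tendsto U).comp hu
  have h2 : Tendsto (fun k => (v k) ^ q) l (𝓝 (V ^ q)) :=
    ((NNReal.continuous_rpow_const hq).tendsto V).comp hv
  have h3 : Tendsto (fun k => (u k) ^ p + r * (v k) ^ q) l (𝓝 (U ^ p + r * V ^ q)) :=
    h1.add (h2.const_mul r)
  exact ((NNReal.continuous_rpow_const hlam).tendsto _).comp h3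


section Core
variable {φ : ℝ≥0 → ℝ≥0} {p q lam : ℝ} {r : ℝ≥0}

/-- Sequence step, even→odd pattern. -/
lemma step_core₁ (hφ : InPhi φ) (hp : 0 ≤ p) (hq : 0 ≤ q) (hlam : 0 ≤ lam) {a b c0 : ℝ≥0}
    (H : Fex p q lam r b b ≤ φ (max (Fex p q lam r a b) (max (Fex p q lam r a a)
      (max (Fex p q lam r b a) (max (Fex p q lam r a b)
      (max (min (Fex p q lam r c0 b) (Fex p q lam r 0 a))
           (min (Fex p q lam r c0 a) (Fex p q lam r 0 b)))))))) :
    Fex p q lam r b b ≤ φ (Fex p q lam r a a) := by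
  apply le_phi_of_le_phi_max hφ
  refine H.trans (hφ.1 ?_)
  refine max_le (Fex_mixed hp hq hlam a b) (max_le (le_max_left _ _) (max_le
    ((Fex_mixed hp hq hlam b a).trans_eq (max_comm _ _)) (max_le (Fex_mixed hp hq hlam a b)
    (max_le ((min_le_right _ _).trans
      (le_max_of_le_left (Fex_mono hp hq hlam (zero_le : 0 ≤ a) le_rfl)))
      ((min_le_right _ _).trans
      (le_max_of_le_right (Fex_mono hp hq hlam (zero_le : 0 ≤ b) le_rfl)))))))

/-- Sequence step, odd→even pattern. -/
lemma step_core₂ (hφ : InPhi φ) (hp : 0 ≤ p) (hq : 0 ≤ q) (hlam : 0 ≤ lam) {a b c0 : ℝ≥0}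
    (H : Fex p q lam r b b ≤ φ (max (Fex p q lam r a a) (max (Fex p q lam r a b)
      (max (Fex p q lam r a b) (max (Fex p q lam r b a)
      (max (min (Fex p q lam r 0 a) (Fex p q lam r c0 b))
           (min (Fex p q lam r 0 b) (Fex p q lam r c0 a)))))))) :
    Fex p q lam r b b ≤ φ (Fex p q lam r a a) := by
  apply le_phi_of_le_phi_max hφ
  refine H.trans (hφ.1 ?_)
  refine max_le (le_max_left _ _) (max_le (Fex_mixed hp hq hlam a b) (max_le
    (Fex_mixed hp hq hlam a b) (max_le ((Fex_mixed hp hq hlam b a).trans_eq (max_comm _ _))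
    (max_le ((min_le_left _ _).trans
      (le_max_of_le_left (Fex_mono hp hq hlam (zero_le : 0 ≤ a) le_rfl)))
      ((min_le_left _ _).trans
      (le_max_of_le_right (Fex_mono hp hq hlam (zero_le : 0 ≤ b) le_rfl)))))))

/-- Bound the big max when all five base distances are `≤ δ`. -/
lemma bigmax_le (hp : 0 ≤ p) (hq : 0 ≤ q) (hlam : 0 ≤ lam) {dAB dAS dBT dBS dAT δ : ℝ≥0}
    (h1 : dAB ≤ δ) (h2 : dAS ≤ δ) (h3 : dBT ≤ δ) (h4 : dBS ≤ δ) (h5 : dAT ≤ δ) :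
    max (Fex p q lam r dAB dAS) (max (Fex p q lam r dAB dBT)
      (max (Fex p q lam r dAS dBT) (max (Fex p q lam r dBT dAS)
      (max (min (Fex p q lam r dBS dAS) (Fex p q lam r dAT dBT))
           (min (Fex p q lam r dBS dBT) (Fex p q lam r dAT dAS)))))) ≤
    Fex p q lam r δ δ := by
  have m := fun {u v : ℝ≥0} (hu : u ≤ δ) (hv : v ≤ δ) => Fex_mono (r := r) hp hq hlam hu hv
  exact max_le (m h1 h2) (max_le (m h1 h3) (max_le (m h2 h3) (max_le (m h3 h2)
    (max_le ((min_le_left _ _).trans (m h4 h2)) ((min_le_left _ _).trans (m h4 h3))))))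

/-- Algebraic coincidence site: all distances `≤ δ` forces `δ = 0`. -/
lemma site_le (hφ : InPhi φ) (hp : 0 < p) (hq : 0 ≤ q) (hlam : 0 < lam)
    {dAB dAS dBT dBS dAT δ : ℝ≥0}
    (h1 : dAB ≤ δ) (h2 : dAS ≤ δ) (h3 : dBT ≤ δ) (h4 : dBS ≤ δ) (h5 : dAT ≤ δ)
    (H : Fex p q lam r δ δ ≤ φ (max (Fex p q lam r dAB dAS) (max (Fex p q lam r dAB dBT)
      (max (Fex p q lam r dAS dBT) (max (Fex p q lam r dBT dAS)
      (max (min (Fex p q lam r dBS dAS) (Fex p q lam r dAT dBT))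
           (min (Fex p q lam r dBS dBT) (Fex p q lam r dAT dAS)))))))) :
    δ = 0 := by
  have hb := bigmax_le (r := r) hp.le hq hlam.le h1 h2 h3 h4 h5
  have := collapse hφ (H.trans (hφ.1 hb)) le_rfl
  exact Fex_eq_zero hp hlam this

/-- Limit site: pass to the limit in the contraction inequality. -/
lemma limit_site (hφ : InPhi φ) (hp : 0 < p) (hq : 0 ≤ q) (hlam : 0 < lam)
    {u1 u2 u3 u4 u5 w : ℕ → ℝ≥0} {L1 L2 L3 L4 L5 δ : ℝ≥0}
    (hw : Filter.Tendsto w Filter.atTop (𝓝 δ))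
    (h1 : Filter.Tendsto u1 Filter.atTop (𝓝 L1))
    (h2 : Filter.Tendsto u2 Filter.atTop (𝓝 L2))
    (h3 : Filter.Tendsto u3 Filter.atTop (𝓝 L3))
    (h4 : Filter.Tendsto u4 Filter.atTop (𝓝 L4))
    (h5 : Filter.Tendsto u5 Filter.atTop (𝓝 L5))
    (b1 : L1 ≤ δ) (b2 : L2 ≤ δ) (b3 : L3 ≤ δ) (b4 : L4 ≤ δ) (b5 : L5 ≤ δ)
    (H : ∀ k, Fex p q lam r (w k) (w k) ≤ φ (max (Fex p q lam r (u1 k) (u2 k))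
      (max (Fex p q lam r (u1 k) (u3 k)) (max (Fex p q lam r (u2 k) (u3 k))
      (max (Fex p q lam r (u3 k) (u2 k))
      (max (min (Fex p q lam r (u4 k) (u2 k)) (Fex p q lam r (u5 k) (u3 k)))
           (min (Fex p q lam r (u4 k) (u3 k)) (Fex p q lam r (u5 k) (u2 k))))))))) :
    δ = 0 := by
  have FT := fun {u v : ℕ → ℝ≥0} {U V : ℝ≥0}
    (hu : Filter.Tendsto u Filter.atTop (𝓝 U)) (hv : Filter.Tendsto v Filter.atTop (𝓝 V)) =>
    Fex_tendsto (r := r) hp.le hq hlam.le hu hv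
  have bigT : Filter.Tendsto (fun k => max (Fex p q lam r (u1 k) (u2 k))
      (max (Fex p q lam r (u1 k) (u3 k)) (max (Fex p q lam r (u2 k) (u3 k))
      (max (Fex p q lam r (u3 k) (u2 k))
      (max (min (Fex p q lam r (u4 k) (u2 k)) (Fex p q lam r (u5 k) (u3 k)))
           (min (Fex p q lam r (u4 k) (u3 k)) (Fex p q lam r (u5 k) (u2 k))))))))
      Filter.atTop (𝓝 (max (Fex p q lam r L1 L2)
      (max (Fex p q lam r L1 L3) (max (Fex p q lam r L2 L3)
      (max (Fex p q lam r L3 L2)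
      (max (min (Fex p q lam r L4 L2) (Fex p q lam r L5 L3))
           (min (Fex p q lam r L4 L3) (Fex p q lam r L5 L2)))))))) :=
    (FT h1 h2).max ((FT h1 h3).max ((FT h2 h3).max ((FT h3 h2).max
      (((FT h4 h2).min (FT h5 h3)).max ((FT h4 h3).min (FT h5 h2))))))
  have key : Fex p q lam r δ δ ≤ φ (max (Fex p q lam r L1 L2)
      (max (Fex p q lam r L1 L3) (max (Fex p q lam r L2 L3)
      (max (Fex p q lam r L3 L2)
      (max (min (Fex p q lam r L4 L2) (Fex p q lam r L5 L3))
           (min (Fex p q lam r L4 L3) (Fex p q lam r L5 L2))))))) :=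
    le_of_tendsto_of_tendsto' (FT hw hw) ((hφ.2.1.tendsto _).comp bigT) H
  have hb := bigmax_le (r := r) hp.le hq hlam.le b1 b2 b3 b4 b5
  have := collapse hφ (key.trans (hφ.1 hb)) le_rfl
  exact Fex_eq_zero hp hlam this


lemma M_tendsto_zero (hφ : InPhi φ) {M : ℕ → ℝ≥0} (hstep : ∀ n, M (n+1) ≤ φ (M n)) :
    Filter.Tendsto M Filter.atTop (𝓝 0) := by
  have hanti : Antitone M := antitone_nat_of_succ_le (fun n => (hstep n).trans (phi_le hφ _))
  have hT : Filter.Tendsto M Filter.atTop (𝓝 (⨅ n, M n)) := tendsto_atTop_ciInf hanti (OrderBot.bddBelow _)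
  have hT1 : Filter.Tendsto (fun n => M (n+1)) Filter.atTop (𝓝 (⨅ n, M n)) :=
    hT.comp (Filter.tendsto_add_atTop_nat 1)
  have hT2 : Filter.Tendsto (fun n => φ (M n)) Filter.atTop (𝓝 (φ (⨅ n, M n))) :=
    (hφ.2.1.tendsto _).comp hT
  have hLφ : (⨅ n, M n) ≤ φ (⨅ n, M n) := le_of_tendsto_of_tendsto' hT1 hT2 hstep
  have hL0 : (⨅ n, M n) = 0 := collapse hφ hLφ le_rfl
  rwa [hL0] at hT

end Core
end Stmt3Aux

theorem stmt_3 {X : Type*} [MetricSpace X] (K : Set X) (hK : K.Nonempty)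
    (A B S T : X → X)
    (hA : MapsTo A K K) (hB : MapsTo B K K) (hS : MapsTo S K K) (hT : MapsTo T K K)
    (φ : ℝ≥0 → ℝ≥0) (hφ : InPhi φ)
    (p lam q : ℝ) (r : ℝ≥0) (hp : 0 < p) (hlam : 0 < lam) (hq : 0 ≤ q)
    (hcontr : ∀ x ∈ K, ∀ y ∈ K,
      ((nndist (S x) (T y)) ^ p + r * (nndist (S x) (T y)) ^ q) ^ lam ≤
        φ (max (((nndist (A x) (B y)) ^ p + r * (nndist (A x) (S x)) ^ q) ^ lam)
          (max (((nndist (A x) (B y)) ^ p + r * (nndist (B y) (T y)) ^ q) ^ lam)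
          (max (((nndist (A x) (S x)) ^ p + r * (nndist (B y) (T y)) ^ q) ^ lam)
          (max (((nndist (B y) (T y)) ^ p + r * (nndist (A x) (S x)) ^ q) ^ lam)
          (max (min (((nndist (B y) (S x)) ^ p + r * (nndist (A x) (S x)) ^ q) ^ lam)
                    (((nndist (A x) (T y)) ^ p + r * (nndist (B y) (T y)) ^ q) ^ lam))
               (min (((nndist (B y) (S x)) ^ p + r * (nndist (B y) (T y)) ^ q) ^ lam)
                    (((nndist (A x) (T y)) ^ p + r * (nndist (A x) (S x)) ^ q) ^ lam))))))))
    (hAS : ∀ x ∈ K, A x = S x → A (S x) = S (A x))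
    (hBT : ∀ x ∈ K, B x = T x → B (T x) = T (B x))
    (hTA : T '' K ⊆ A '' K)
    (hSB : S '' K ⊆ B '' K)
    (hcomp : IsComplete (T '' K) ∨ IsComplete (S '' K) ∨
             IsComplete (A '' K) ∨ IsComplete (B '' K)) :
    ∃! z, z ∈ K ∧ A z = z ∧ B z = z ∧ S z = z ∧ T z = z := by
  classical
  open Stmt3Aux Filter Topology in
  obtain ⟨x0, hx0⟩ := hK
  -- choice functions for the two range inclusions
  have hbex : ∀ u : X, ∃ w, u ∈ K → (w ∈ K ∧ B w = S u) := by
    intro u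
    by_cases h : u ∈ K
    · obtain ⟨w, hw, hweq⟩ := hSB ⟨u, h, rfl⟩
      exact ⟨w, fun _ => ⟨hw, hweq⟩⟩
    · exact ⟨x0, fun h' => absurd h' h⟩
  have haex : ∀ u : X, ∃ w, u ∈ K → (w ∈ K ∧ A w = T u) := by
    intro u
    by_cases h : u ∈ K
    · obtain ⟨w, hw, hweq⟩ := hTA ⟨u, h, rfl⟩
      exact ⟨w, fun _ => ⟨hw, hweq⟩⟩
    · exact ⟨x0, fun h' => absurd h' h⟩
  choose nb hnb using hbex
  choose na hna using haex
  -- the alternating sequence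
  let x : ℕ → X := fun n => Nat.rec x0 (fun k ih => if Even k then nb ih else na ih) n
  have hx_succ : ∀ k, x (k+1) = if Even k then nb (x k) else na (x k) := fun k => rfl
  have hxK : ∀ n, x n ∈ K := by
    intro n
    induction n with
    | zero => exact hx0
    | succ k ih =>
      rw [hx_succ]
      split
      · exact (hnb _ ih).1
      · exact (hna _ ih).1
  have hev : ∀ n : ℕ, n % 2 = 0 → Even n := fun n h => Nat.even_iff.mpr h
  have hodd : ∀ n : ℕ, n % 2 = 1 → ¬ Even n := fun n h => by simp [Nat.even_iff, h]
  have heqB : ∀ m : ℕ, B (x (2*m+1)) = S (x (2*m)) := by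
    intro m
    rw [hx_succ, if_pos (hev _ (by omega))]
    exact (hnb (x (2*m)) (hxK (2*m))).2
  have heqA : ∀ m : ℕ, A (x (2*m+2)) = T (x (2*m+1)) := by
    intro m
    have : (2*m+2) = (2*m+1)+1 := by omega
    rw [this, hx_succ, if_neg (hodd _ (by omega))]
    exact (hna (x (2*m+1)) (hxK (2*m+1))).2
  let y : ℕ → X := fun n => if Even n then S (x n) else T (x n)
  have hyS : ∀ m : ℕ, S (x (2*m)) = y (2*m) := fun m => (if_pos (hev _ (by omega))).symm
  have hyS2 : ∀ m : ℕ, S (x (2*m+2)) = y (2*m+2) := by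
    intro m
    have h2 : (2*(m+1)) = 2*m+2 := by omega
    have := hyS (m+1); rwa [h2] at this
  have hyT : ∀ m : ℕ, T (x (2*m+1)) = y (2*m+1) := fun m => (if_neg (hodd _ (by omega))).symm
  have hyT3 : ∀ m : ℕ, T (x (2*m+3)) = y (2*m+3) := by
    intro m
    have h2 : (2*(m+1)+1) = 2*m+3 := by omega
    have := hyT (m+1); rwa [h2] at this
  have hA2 : ∀ m : ℕ, A (x (2*m+2)) = y (2*m+1) := fun m => (heqA m).trans (hyT m)
  have hB1 : ∀ m : ℕ, B (x (2*m+1)) = y (2*m) := fun m => (heqB m).trans (hyS m)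
  have hB3 : ∀ m : ℕ, B (x (2*m+3)) = y (2*m+2) := by
    intro m
    have h1 : (2*(m+1)+1) = 2*m+3 := by omega
    have h2 : (2*(m+1)) = 2*m+2 := by omega
    have := (heqB (m+1)).trans (hyS (m+1))
    rwa [h1, h2] at this
  -- consecutive distances and their `Fex`-values
  let d : ℕ → ℝ≥0 := fun n => nndist (y n) (y (n+1))
  let M : ℕ → ℝ≥0 := fun n => Fex p q lam r (d n) (d n)
  have hstep : ∀ n, M (n+1) ≤ φ (M n) := by
    intro n
    rcases Nat.even_or_odd n with ⟨m, hm⟩ | ⟨m, hm⟩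
    · -- n = 2m : use x := x (2m+2), y := x (2m+1)
      have hm' : n = 2*m := by omega
      subst hm'
      have H := hcontr (x (2*m+2)) (hxK (2*m+2)) (x (2*m+1)) (hxK (2*m+1))
      rw [hyS2 m, hyT m, hA2 m, hB1 m] at H
      rw [nndist_comm (y (2*m+2)) (y (2*m+1)), nndist_comm (y (2*m+1)) (y (2*m)),
        nndist_self] at H
      exact step_core₁ hφ hp.le hq hlam.le H
    · -- n = 2m+1 : use x := x (2m+2), y := x (2m+3)
      subst hm
      have H := hcontr (x (2*m+2)) (hxK (2*m+2)) (x (2*m+3)) (hxK (2*m+3))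
      rw [hyS2 m, hyT3 m, hA2 m, hB3 m] at H
      rw [nndist_self] at H
      exact step_core₂ hφ hp.le hq hlam.le H
  have hM0 : Tendsto M atTop (𝓝 0) := M_tendsto_zero hφ hstep
  -- degenerate case `q = 0 ∧ r ≠ 0` is impossible
  by_cases hz : r * (0:ℝ≥0) ^ q = 0
  case neg =>
    exfalso
    have hq0 : q = 0 := by
      by_contra h
      exact hz (by rw [NNReal.zero_rpow h, mul_zero])
    have hrlam : ∀ n, r ^ lam ≤ M n := by
      intro n
      have h2 : r ≤ (d n) ^ p + r * (d n) ^ q := by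
        rw [hq0, NNReal.rpow_zero, mul_one]
        exact le_add_self
      exact NNReal.rpow_le_rpow h2 hlam.le
    have : r ^ lam ≤ 0 := le_of_tendsto_of_tendsto' tendsto_const_nhds hM0 hrlam
    have hr0 : r = 0 := by
      have := le_antisymm this zero_le
      exact (NNReal.rpow_eq_zero_iff.mp this).1
    apply hz
    rw [hr0, zero_mul]
  case pos =>
  -- distances tend to zero
  have hplam : p * lam ≠ 0 := by positivity
  have hd0 : Tendsto d atTop (𝓝 0) := by
    have h1 : ∀ n, d n ^ (p*lam) ≤ M n := by
      intro n
      show d n ^ (p*lam) ≤ ((d n) ^ p + r * (d n) ^ q) ^ lam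
      rw [NNReal.rpow_mul]
      exact NNReal.rpow_le_rpow le_self_add hlam.le
    have h2 : Tendsto (fun n => d n ^ (p*lam)) atTop (𝓝 0) :=
      tendsto_of_tendsto_of_tendsto_of_le_of_le tendsto_const_nhds hM0
        (fun n => zero_le) h1
    have h3 := ((NNReal.continuous_rpow_const
        (inv_nonneg.mpr (by positivity : (0:ℝ) ≤ p * lam))).tendsto 0).comp h2
    have h4 : ∀ n, (d n ^ (p*lam)) ^ (p*lam)⁻¹ = d n := by
      intro n
      rw [← NNReal.rpow_mul, mul_inv_cancel₀ hplam, NNReal.rpow_one]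
    rw [NNReal.zero_rpow (inv_ne_zero hplam)] at h3
    exact h3.congr h4
  -- real versions
  let dR : ℕ → ℝ := fun n => dist (y n) (y (n+1))
  have hdR0 : Tendsto dR atTop (𝓝 0) := by
    have := NNReal.tendsto_coe.mpr hd0
    simpa [d, dR, coe_nndist] using this
  -- perturbation helper
  have perturb : ∀ (a b a' b' : ℕ → X) (L : ℝ),
      Tendsto (fun k => dist (a k) (b k)) atTop (𝓝 L) →
      Tendsto (fun k => dist (a k) (a' k)) atTop (𝓝 0) →
      Tendsto (fun k => dist (b k) (b' k)) atTop (𝓝 0) →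
      Tendsto (fun k => dist (a' k) (b' k)) atTop (𝓝 L) := by
    intro a b a' b' L hL ha hb
    have h : ∀ k, ‖dist (a' k) (b' k) - dist (a k) (b k)‖ ≤
        dist (a k) (a' k) + dist (b k) (b' k) := by
      intro k
      rw [Real.norm_eq_abs, ← Real.dist_eq]
      calc dist (dist (a' k) (b' k)) (dist (a k) (b k))
          ≤ dist (a' k) (a k) + dist (b' k) (b k) := dist_dist_dist_le _ _ _ _
        _ = dist (a k) (a' k) + dist (b k) (b' k) := by
            rw [dist_comm (a' k), dist_comm (b' k)]
    have hdiff : Tendsto (fun k => dist (a' k) (b' k) - dist (a k) (b k)) atTop (𝓝 0) :=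
      squeeze_zero_norm h (by simpa using ha.add hb)
    have h2 := hL.add hdiff
    rw [add_zero] at h2
    exact h2.congr (fun k => by ring)
  -- the sequence is Cauchy
  have hycauchy : CauchySeq y := by
    rw [Metric.cauchySeq_iff]
    by_contra hncau
    push_neg at hncau
    obtain ⟨ε, hε, hno⟩ := hncau
    have hN1ex := Metric.tendsto_atTop.mp hdR0 (ε/8) (by positivity)
    obtain ⟨N1, hN1⟩ := hN1ex
    have hN1' : ∀ j, N1 ≤ j → dR j < ε/8 := by
      intro j hj
      have := hN1 j hj
      rwa [Real.dist_0_eq_abs, abs_of_nonneg dist_nonneg] at this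
    have claim : ∀ k : ℕ, ∃ mm, k ≤ mm ∧ ∃ nn, mm < nn ∧
        ε/2 ≤ dist (y (2*mm)) (y (2*nn)) := by
      intro k
      have key : ∀ m n : ℕ, max (2*k+1) N1 ≤ m → max (2*k+1) N1 ≤ n → m < n →
          ε ≤ dist (y m) (y n) → ∃ mm, k ≤ mm ∧ ∃ nn, mm < nn ∧
          ε/2 ≤ dist (y (2*mm)) (y (2*nn)) := by
        intro m n hm hn hlt hdist
        have hRm : dR m < ε/8 := hN1' m (le_trans (le_max_right _ _) hm)
        have hRn : dR n < ε/8 := hN1' n (le_trans (le_max_right _ _) hn)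
        have hmn2 : m + 2 ≤ n := by
          by_contra hcon
          have hn1 : n = m + 1 := by omega
          subst hn1
          have : ε ≤ dR m := hdist
          linarith
        refine ⟨(m+1)/2, by omega, (n+1)/2, by omega, ?_⟩
        have e1 : dist (y m) (y (2*((m+1)/2))) ≤ dR m := by
          rcases (by omega : 2*((m+1)/2) = m ∨ 2*((m+1)/2) = m+1) with h | h
          · rw [h, dist_self]; exact dist_nonneg
          · rw [h]
        have e2 : dist (y (2*((n+1)/2))) (y n) ≤ dR n := by
          rcases (by omega : 2*((n+1)/2) = n ∨ 2*((n+1)/2) = n+1) with h | h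
          · rw [h, dist_self]; exact dist_nonneg
          · rw [h, dist_comm]
        have tri := dist_triangle4 (y m) (y (2*((m+1)/2))) (y (2*((n+1)/2))) (y n)
        linarith
      obtain ⟨m, hm, n, hn, hdist⟩ := hno (max (2*k+1) N1)
      rcases lt_trichotomy m n with h | h | h
      · exact key m n hm hn h hdist
      · exfalso
        subst h
        rw [dist_self] at hdist
        linarith
      · exact key n m hn hm h (by rwa [dist_comm])
    choose mf hmf hexn using claim
    let nf : ℕ → ℕ := fun k => Nat.find (hexn k)
    have hnf : ∀ k, mf k < nf k ∧ ε/2 ≤ dist (y (2*mf k)) (y (2*nf k)) :=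
      fun k => Nat.find_spec (hexn k)
    have hmin : ∀ k j, j < nf k →
        ¬(mf k < j ∧ ε/2 ≤ dist (y (2*mf k)) (y (2*j))) :=
      fun k j hj => Nat.find_min (hexn k) hj
    let jf : ℕ → ℕ := fun k => nf k - 1
    have hjf : ∀ k, nf k = jf k + 1 ∧ mf k ≤ jf k := by
      intro k
      have h1 := (hnf k).1
      have h2 := hmf k
      show nf k = nf k - 1 + 1 ∧ mf k ≤ nf k - 1
      omega
    let D : ℕ → ℝ := fun k => dist (y (2*jf k + 2)) (y (2*mf k))
    have hDlow : ∀ k, ε/2 ≤ D k := by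
      intro k
      have h2 := (hnf k).2
      have hi : 2*nf k = 2*jf k + 2 := by have := (hjf k).1; omega
      rw [hi, dist_comm] at h2
      exact h2
    -- auxiliary tendsto facts
    have hmf_top : Tendsto (fun k => 2*mf k) atTop atTop :=
      tendsto_atTop_mono (f := id)
        (fun k => by show k ≤ 2*mf k; have := hmf k; omega) tendsto_id
    have hjf_top1 : Tendsto (fun k => 2*jf k) atTop atTop :=
      tendsto_atTop_mono (f := id)
        (fun k => by
          show k ≤ 2*jf k
          have h1 := hmf k
          have h2 := (hjf k).2
          omega) tendsto_id
    have hw1 : Tendsto (fun k => dR (2*jf k)) atTop (𝓝 0) := hdR0.comp hjf_top1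
    have hw2 : Tendsto (fun k => dR (2*jf k + 1)) atTop (𝓝 0) :=
      hdR0.comp (tendsto_atTop_mono (fun k => (by omega : 2*jf k ≤ 2*jf k + 1)) hjf_top1)
    have hw3 : Tendsto (fun k => dR (2*mf k)) atTop (𝓝 0) := hdR0.comp hmf_top
    have hDup : ∀ k, D k ≤ ε/2 + (dR (2*jf k) + dR (2*jf k + 1)) := by
      intro k
      rcases eq_or_lt_of_le (hjf k).2 with heq | hlt
      · -- nf k = mf k + 1
        have tri := dist_triangle (y (2*jf k + 2)) (y (2*jf k + 1)) (y (2*jf k))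
        have h1 : dist (y (2*jf k + 2)) (y (2*jf k + 1)) = dR (2*jf k + 1) := by
          rw [dist_comm]
        have h2 : dist (y (2*jf k + 1)) (y (2*jf k)) = dR (2*jf k) := by
          rw [dist_comm]
        have h3 : D k ≤ dR (2*jf k + 1) + dR (2*jf k) := by
          have : D k = dist (y (2*jf k + 2)) (y (2*jf k)) := by
            show dist _ _ = _
            rw [← heq]
          rw [this]
          calc dist (y (2*jf k + 2)) (y (2*jf k)) ≤
              dist (y (2*jf k + 2)) (y (2*jf k + 1)) + dist (y (2*jf k + 1)) (y (2*jf k)) :=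
                dist_triangle _ _ _
            _ = dR (2*jf k + 1) + dR (2*jf k) := by rw [h1, h2]
        have : (0:ℝ) ≤ ε/2 := by positivity
        linarith
      · have h0 := (hjf k).1
        have h1 := hmin k (jf k) (by omega)
        have h2 : dist (y (2*mf k)) (y (2*jf k)) < ε/2 := by
          by_contra hcon
          push_neg at hcon
          exact h1 ⟨hlt, hcon⟩
        have tri := dist_triangle4 (y (2*jf k + 2)) (y (2*jf k + 1)) (y (2*jf k)) (y (2*mf k))
        have e1 : dist (y (2*jf k + 2)) (y (2*jf k + 1)) = dR (2*jf k + 1) := by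
          rw [dist_comm]
        have e2 : dist (y (2*jf k + 1)) (y (2*jf k)) = dR (2*jf k) := by
          rw [dist_comm]
        have e3 : dist (y (2*jf k)) (y (2*mf k)) = dist (y (2*mf k)) (y (2*jf k)) :=
          dist_comm _ _
        show dist (y (2*jf k + 2)) (y (2*mf k)) ≤ _
        rw [e1, e2, e3] at tri
        linarith
    have hDtend : Tendsto D atTop (𝓝 (ε/2)) := by
      have hup : Tendsto (fun k => ε/2 + (dR (2*jf k) + dR (2*jf k + 1))) atTop
          (𝓝 (ε/2 + (0 + 0))) := tendsto_const_nhds.add (hw1.add hw2)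
      rw [add_zero, add_zero] at hup
      exact tendsto_of_tendsto_of_tendsto_of_le_of_le tendsto_const_nhds hup hDlow hDup
    -- the five real limits
    have t1 : Tendsto (fun k => dist (y (2*jf k + 1)) (y (2*mf k))) atTop (𝓝 (ε/2)) := by
      refine perturb (fun k => y (2*jf k + 2)) (fun k => y (2*mf k)) _ _ _ hDtend ?_ ?_
      · exact (hw2.congr (fun k => (dist_comm _ _ : dR (2*jf k + 1) = _)))
      · exact tendsto_const_nhds.congr (fun k => (dist_self _).symm)
    have t4 : Tendsto (fun k => dist (y (2*mf k)) (y (2*jf k + 2))) atTop (𝓝 (ε/2)) :=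
      hDtend.congr (fun k => dist_comm _ _)
    have t5 : Tendsto (fun k => dist (y (2*jf k + 1)) (y (2*mf k + 1))) atTop (𝓝 (ε/2)) := by
      refine perturb (fun k => y (2*jf k + 2)) (fun k => y (2*mf k)) _ _ _ hDtend ?_ ?_
      · exact (hw2.congr (fun k => (dist_comm _ _ : dR (2*jf k + 1) = _)))
      · exact hw3
    have tw : Tendsto (fun k => dist (y (2*jf k + 2)) (y (2*mf k + 1))) atTop (𝓝 (ε/2)) := by
      refine perturb (fun k => y (2*jf k + 2)) (fun k => y (2*mf k)) _ _ _ hDtend ?_ ?_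
      · exact tendsto_const_nhds.congr (fun k => (dist_self _).symm)
      · exact hw3
    -- pass to ℝ≥0
    let E : ℝ≥0 := ⟨ε/2, by positivity⟩
    have hEne : E ≠ 0 := by
      intro h
      have : (E:ℝ) = 0 := by rw [h]; rfl
      have : ε/2 = 0 := this
      linarith
    have conv : ∀ (u : ℕ → X) (v : ℕ → X) (L : ℝ≥0),
        Tendsto (fun k => dist (u k) (v k)) atTop (𝓝 (L:ℝ)) →
        Tendsto (fun k => nndist (u k) (v k)) atTop (𝓝 L) := by
      intro u v L h
      refine NNReal.tendsto_coe.mp ?_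
      simpa [coe_nndist] using h
    have T1 := conv _ _ E t1
    have T2 : Tendsto (fun k => nndist (y (2*jf k + 1)) (y (2*jf k + 2))) atTop (𝓝 0) := by
      refine conv _ _ 0 ?_
      have : Tendsto (fun k => dist (y (2*jf k + 1)) (y (2*jf k + 2))) atTop (𝓝 0) :=
        hw2.congr (fun k => rfl)
      simpa using this
    have T3 : Tendsto (fun k => nndist (y (2*mf k)) (y (2*mf k + 1))) atTop (𝓝 0) := by
      refine conv _ _ 0 ?_
      simpa using hw3
    have T4 := conv _ _ E t4
    have T5 := conv _ _ E t5
    have TW := conv _ _ E tw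
    -- apply the limit site lemma
    have Hk : ∀ k, Fex p q lam r (nndist (y (2*jf k + 2)) (y (2*mf k + 1))) (nndist (y (2*jf k + 2)) (y (2*mf k + 1))) ≤ φ (max (Fex p q lam r (nndist (y (2*jf k + 1)) (y (2*mf k))) (nndist (y (2*jf k + 1)) (y (2*jf k + 2)))) (max (Fex p q lam r (nndist (y (2*jf k + 1)) (y (2*mf k))) (nndist (y (2*mf k)) (y (2*mf k + 1)))) (max (Fex p q lam r (nndist (y (2*jf k + 1)) (y (2*jf k + 2))) (nndist (y (2*mf k)) (y (2*mf k + 1)))) (max (Fex p q lam r (nndist (y (2*mf k)) (y (2*mf k + 1))) (nndist (y (2*jf k + 1)) (y (2*jf k + 2)))) (max (min (Fex p q lam r (nndist (y (2*mf k)) (y (2*jf k + 2))) (nndist (y (2*jf k + 1)) (y (2*jf k + 2)))) (Fex p q lam r (nndist (y (2*jf k + 1)) (y (2*mf k + 1))) (nndist (y (2*mf k)) (y (2*mf k + 1))))) (min (Fex p q lam r (nndist (y (2*mf k)) (y (2*jf k + 2))) (nndist (y (2*mf k)) (y (2*mf k + 1)))) (Fex p q lam r (nndist (y (2*jf k + 1))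 (y (2*mf k + 1))) (nndist (y (2*jf k + 1)) (y (2*jf k + 2)))))))))) := by
      intro k
      have H := hcontr (x (2*jf k + 2)) (hxK (2*jf k + 2)) (x (2*mf k + 1)) (hxK (2*mf k + 1))
      rw [hyS2 (jf k), hyT (mf k), hA2 (jf k), hB1 (mf k)] at H
      exact H
    have hE0 : E = 0 :=
      limit_site hφ hp hq hlam TW T1 T2 T3 T4 T5 le_rfl zero_le zero_le le_rfl
        le_rfl Hk
    exact hEne hE0
  -- extract the limit point
  have heven_top : Tendsto (fun n : ℕ => 2*n) atTop atTop :=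
    tendsto_atTop_mono (f := id) (fun n => by show n ≤ 2*n; omega) tendsto_id
  have hodd_top : Tendsto (fun n : ℕ => 2*n+1) atTop atTop :=
    tendsto_atTop_mono (f := id) (fun n => by show n ≤ 2*n+1; omega) tendsto_id
  have heven2_top : Tendsto (fun n : ℕ => 2*n+2) atTop atTop :=
    tendsto_atTop_mono (f := id) (fun n => by show n ≤ 2*n+2; omega) tendsto_id
  obtain ⟨z, hztend, hzAB⟩ : ∃ z, Tendsto y atTop (𝓝 z) ∧ (z ∈ A '' K ∨ z ∈ B '' K) := by
    rcases hcomp with hc | hc | hc | hc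
    · obtain ⟨z, hzmem, hz⟩ := cauchySeq_tendsto_of_isComplete hc
        (fun n => ⟨x (2*n+1), hxK (2*n+1), hyT n⟩) (hycauchy.comp_tendsto hodd_top)
      exact ⟨z, tendsto_nhds_of_cauchySeq_of_subseq hycauchy hodd_top hz, Or.inl (hTA hzmem)⟩
    · obtain ⟨z, hzmem, hz⟩ := cauchySeq_tendsto_of_isComplete hc
        (fun n => ⟨x (2*n), hxK (2*n), hyS n⟩) (hycauchy.comp_tendsto heven_top)
      exact ⟨z, tendsto_nhds_of_cauchySeq_of_subseq hycauchy heven_top hz, Or.inr (hSB hzmem)⟩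
    · obtain ⟨z, hzmem, hz⟩ := cauchySeq_tendsto_of_isComplete hc
        (fun n => ⟨x (2*n+2), hxK (2*n+2), hA2 n⟩) (hycauchy.comp_tendsto hodd_top)
      exact ⟨z, tendsto_nhds_of_cauchySeq_of_subseq hycauchy hodd_top hz, Or.inl hzmem⟩
    · obtain ⟨z, hzmem, hz⟩ := cauchySeq_tendsto_of_isComplete hc
        (fun n => ⟨x (2*n+1), hxK (2*n+1), hB1 n⟩) (hycauchy.comp_tendsto heven_top)
      exact ⟨z, tendsto_nhds_of_cauchySeq_of_subseq hycauchy heven_top hz, Or.inr hzmem⟩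
  have hye : Tendsto (fun n => y (2*n)) atTop (𝓝 z) := hztend.comp heven_top
  have hyo : Tendsto (fun n => y (2*n+1)) atTop (𝓝 z) := hztend.comp hodd_top
  have hye2 : Tendsto (fun n => y (2*n+2)) atTop (𝓝 z) := hztend.comp heven2_top
  -- coincidence points
  obtain ⟨u, v, huK, hvK, hAu, hSu, hBv, hTv⟩ :
      ∃ u v, u ∈ K ∧ v ∈ K ∧ A u = z ∧ S u = z ∧ B v = z ∧ T v = z := by
    rcases hzAB with ⟨u, huK, hAu⟩ | ⟨v, hvK, hBv⟩
    · -- z ∈ A '' K : first get S u = z by a limit argument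
      have Hn : ∀ n, Fex p q lam r (nndist (S u) (y (2*n+1))) (nndist (S u) (y (2*n+1))) ≤
          φ (max (Fex p q lam r (nndist z (y (2*n))) (nndist z (S u)))
            (max (Fex p q lam r (nndist z (y (2*n))) (nndist (y (2*n)) (y (2*n+1))))
            (max (Fex p q lam r (nndist z (S u)) (nndist (y (2*n)) (y (2*n+1))))
            (max (Fex p q lam r (nndist (y (2*n)) (y (2*n+1))) (nndist z (S u)))
            (max (min (Fex p q lam r (nndist (y (2*n)) (S u)) (nndist z (S u)))
                      (Fex p q lam r (nndist z (y (2*n+1))) (nndist (y (2*n)) (y (2*n+1)))))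
                 (min (Fex p q lam r (nndist (y (2*n)) (S u)) (nndist (y (2*n)) (y (2*n+1))))
                      (Fex p q lam r (nndist z (y (2*n+1))) (nndist z (S u))))))))) := by
        intro n
        have H := hcontr u huK (x (2*n+1)) (hxK (2*n+1))
        rw [hAu, hB1 n, hyT n] at H
        exact H
      have hSu0 : nndist (S u) z = 0 :=
        limit_site hφ hp hq hlam (tendsto_const_nhds.nndist hyo)
          (tendsto_const_nhds.nndist hye) tendsto_const_nhds (hye.nndist hyo)
          (hye.nndist tendsto_const_nhds) (tendsto_const_nhds.nndist hyo)
          (by simp) (le_of_eq (nndist_comm _ _)) (by simp)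
          (le_of_eq (nndist_comm _ _)) (by simp) Hn
      have hSu : S u = z := nndist_eq_zero.mp hSu0
      -- now z ∈ S '' K ⊆ B '' K
      obtain ⟨v, hvK, hBv⟩ := hSB ⟨u, huK, hSu⟩
      -- T v = z algebraically
      have H := hcontr u huK v hvK
      rw [hSu, hAu, hBv] at H
      have hTv0 : nndist z (T v) = 0 :=
        site_le hφ hp hq hlam (by simp) (by simp) le_rfl (by simp) le_rfl H
      exact ⟨u, v, huK, hvK, hAu, hSu, hBv, (nndist_eq_zero.mp hTv0).symm⟩
    · -- z ∈ B '' K : first get T v = z by a limit argument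
      have Hn : ∀ n, Fex p q lam r (nndist (y (2*n+2)) (T v)) (nndist (y (2*n+2)) (T v)) ≤
          φ (max (Fex p q lam r (nndist (y (2*n+1)) z) (nndist (y (2*n+1)) (y (2*n+2))))
            (max (Fex p q lam r (nndist (y (2*n+1)) z) (nndist z (T v)))
            (max (Fex p q lam r (nndist (y (2*n+1)) (y (2*n+2))) (nndist z (T v)))
            (max (Fex p q lam r (nndist z (T v)) (nndist (y (2*n+1)) (y (2*n+2))))
            (max (min (Fex p q lam r (nndist z (y (2*n+2))) (nndist (y (2*n+1)) (y (2*n+2))))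
                      (Fex p q lam r (nndist (y (2*n+1)) (T v)) (nndist z (T v))))
                 (min (Fex p q lam r (nndist z (y (2*n+2))) (nndist z (T v)))
                      (Fex p q lam r (nndist (y (2*n+1)) (T v))
                        (nndist (y (2*n+1)) (y (2*n+2)))))))))) := by
        intro n
        have H := hcontr (x (2*n+2)) (hxK (2*n+2)) v hvK
        rw [hyS2 n, hA2 n, hBv] at H
        exact H
      have hTv0 : nndist z (T v) = 0 :=
        limit_site hφ hp hq hlam (hye2.nndist tendsto_const_nhds)
          (hyo.nndist tendsto_const_nhds) (hyo.nndist hye2) tendsto_const_nhds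
          (tendsto_const_nhds.nndist hye2) (hyo.nndist tendsto_const_nhds)
          (by simp) (by simp) le_rfl (by simp) le_rfl Hn
      have hTv : T v = z := (nndist_eq_zero.mp hTv0).symm
      -- now z ∈ T '' K ⊆ A '' K
      obtain ⟨u, huK, hAu⟩ := hTA ⟨v, hvK, hTv⟩
      -- S u = z algebraically
      have H := hcontr u huK v hvK
      rw [hAu, hBv, hTv] at H
      have hSu0 : nndist (S u) z = 0 :=
        site_le hφ hp hq hlam (by simp) (le_of_eq (nndist_comm _ _)) (by simp)
          (le_of_eq (nndist_comm _ _)) (by simp) H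
      exact ⟨u, v, huK, hvK, hAu, nndist_eq_zero.mp hSu0, hBv, hTv⟩
  have hzK : z ∈ K := hAu ▸ hA huK
  have hAz : A z = S z := by
    have h := hAS u huK (hAu.trans hSu.symm)
    rwa [hSu, hAu] at h
  have hBz : B z = T z := by
    have h := hBT v hvK (hBv.trans hTv.symm)
    rwa [hTv, hBv] at h
  -- S z = z (hence A z = z)
  have hSz : S z = z := by
    have H := hcontr z hzK v hvK
    rw [hBv, hTv, hAz] at H
    have h0 : nndist (S z) z = 0 :=
      site_le hφ hp hq hlam le_rfl (by simp) (by simp) (le_of_eq (nndist_comm _ _))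
        le_rfl H
    exact nndist_eq_zero.mp h0
  have hAzz : A z = z := hAz.trans hSz
  -- T z = z (hence B z = z)
  have hTz : T z = z := by
    have H := hcontr u huK z hzK
    rw [hAu, hSu, hBz] at H
    have h0 : nndist z (T z) = 0 :=
      site_le hφ hp hq hlam le_rfl (by simp) (by simp) (le_of_eq (nndist_comm _ _))
        le_rfl H
    exact (nndist_eq_zero.mp h0).symm
  have hBzz : B z = z := hBz.trans hTz
  refine ⟨z, ⟨hzK, hAzz, hBzz, hSz, hTz⟩, ?_⟩
  rintro w ⟨hwK, hAw, hBw, hSw, hTw⟩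
  have H := hcontr z hzK w hwK
  rw [hSz, hTw, hAzz, hBw] at H
  have h0 : nndist z w = 0 :=
    site_le hφ hp hq hlam le_rfl (by simp) (by simp) (le_of_eq (nndist_comm _ _))
      le_rfl H
  exact (nndist_eq_zero.mp h0).symm
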